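/- Let a > 0 and suppose x : (-a, a) → ℂ satisfies: (i) lim_{t→±a} (a² - t²) x'(t) = 0, and (ii) ∫_{-a}^{a} |d/dξ ((a² - ξ²) x'(ξ))|² dξ = C² < ∞. Then |(a² - t²) x'(t)| ≤ C √(a² - t²)/√a for all t ∈ (-a, a), hence |x'(t)| ≤ (C/√a) · 1/√(a² - t²). -/

import Mathlib

open Set Filter MeasureTheory

lemma cs_aux {S : Set ℝ} (hS : MeasurableSet S) (f : ℝ → ℝ)
    (hf : IntegrableOn f S) (hf2 : IntegrableOn (fun t => f t ^ 2) S)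
    (hm : volume S ≠ ⊤) :
    ∫ t in S, f t ≤ Real.sqrt (volume S).toReal * Real.sqrt (∫ t in S, f t ^ 2) := by
  set m := (volume S).toReal with hmdef
  have hm0 : 0 ≤ m := ENNReal.toReal_nonneg
  set I := ∫ t in S, f t ^ 2 with hIdef
  have hI0 : 0 ≤ I := setIntegral_nonneg hS (fun t _ => sq_nonneg _)
  have key : ∀ c : ℝ, 0 < c → ∫ t in S, f t ≤ I / (2 * c) + c * m / 2 := by
    intro c hc
    have h2c : (0:ℝ) < 2 * c := by linarith
    have hconst : IntegrableOn (fun _ : ℝ => c / 2) S := by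
      exact (integrableOn_const_iff).mpr (Or.inr (lt_top_iff_ne_top.mpr hm))
    have hi : IntegrableOn (fun t => f t ^ 2 / (2 * c) + c / 2) S :=
      (hf2.div_const _).add hconst
    have hmono : ∫ t in S, f t ≤ ∫ t in S, (f t ^ 2 / (2 * c) + c / 2) := by
      refine setIntegral_mono_on hf hi hS ?_
      intro t _
      have h1 : f t * (2 * c) ≤ f t ^ 2 + c ^ 2 + (c/2) * (2*c) - (c/2)*(2*c) := by
        nlinarith [sq_nonneg (f t - c)]
      have : f t ≤ (f t ^ 2 + c ^ 2) / (2 * c) := by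
        rw [le_div_iff₀ h2c]; nlinarith [sq_nonneg (f t - c)]
      calc f t ≤ (f t ^ 2 + c ^ 2) / (2 * c) := this
        _ = f t ^ 2 / (2 * c) + c / 2 := by field_simp
    calc ∫ t in S, f t ≤ ∫ t in S, (f t ^ 2 / (2 * c) + c / 2) := hmono
      _ = I / (2 * c) + c * m / 2 := by
          rw [integral_add (hf2.div_const _) hconst, integral_div, setIntegral_const]
          simp [smul_eq_mul, hmdef, Measure.real]
          ring
  rcases eq_or_lt_of_le hm0 with hm0' | hmpos
  · have : volume S = 0 := by
      have := ENNReal.toReal_eq_zero_iff (volume S)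
      rw [← hmdef] at this
      rcases this.mp hm0'.symm with h | h
      · exact h
      · exact absurd h hm
    rw [hIdef, ← hm0']
    simp [Measure.restrict_eq_zero.mpr this]
  rcases eq_or_lt_of_le hI0 with hI0' | hIpos
  · rw [← hI0', Real.sqrt_zero, mul_zero]
    refine le_of_forall_pos_le_add ?_
    intro ε hε
    have := key (2 * ε / m) (by positivity)
    rw [← hI0'] at this
    calc ∫ t in S, f t ≤ 0 / (2 * (2 * ε / m)) + (2 * ε / m) * m / 2 := this
      _ = ε := by field_simp; ring
      _ ≤ 0 + ε := by linarith
  · have hsm : 0 < Real.sqrt m := Real.sqrt_pos.mpr hmpos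
    have hsI : 0 < Real.sqrt I := Real.sqrt_pos.mpr hIpos
    have hmm : Real.sqrt m * Real.sqrt m = m := Real.mul_self_sqrt hm0
    have hII : Real.sqrt I * Real.sqrt I = I := Real.mul_self_sqrt hI0
    have := key (Real.sqrt I / Real.sqrt m) (by positivity)
    calc ∫ t in S, f t ≤ I / (2 * (Real.sqrt I / Real.sqrt m)) + (Real.sqrt I / Real.sqrt m) * m / 2 := this
      _ = Real.sqrt m * Real.sqrt I := by
          field_simp; nlinarith [hmm, hII]

theorem stmt14 (a C : ℝ) (ha : 0 < a) (hC : 0 < C)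
    (x x' g' : ℝ → ℂ)
    (hx : ∀ t ∈ Ioo (-a) a, HasDerivAt x (x' t) t)
    (hg : ∀ t ∈ Ioo (-a) a,
      HasDerivAt (fun s : ℝ => ((a : ℂ)^2 - (s : ℂ)^2) * x' s) (g' t) t)
    (hlim_left :
      Tendsto (fun t : ℝ => ((a : ℂ)^2 - (t : ℂ)^2) * x' t) (nhdsWithin (-a) (Ioo (-a) a)) (nhds 0))
    (hlim_right :
      Tendsto (fun t : ℝ => ((a : ℂ)^2 - (t : ℂ)^2) * x' t) (nhdsWithin a (Ioo (-a) a)) (nhds 0))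
    (hL2 : ∫ t in (-a)..a, ‖g' t‖^2 = C^2)
    (hint : MeasureTheory.IntegrableOn (fun t => ‖g' t‖^2) (Ioo (-a) a)) :
    ∀ t ∈ Ioo (-a) a,
      ‖((a : ℂ)^2 - (t : ℂ)^2) * x' t‖ ≤ C * Real.sqrt (a^2 - t^2) / Real.sqrt a ∧
      ‖x' t‖ ≤ (C / Real.sqrt a) * (1 / Real.sqrt (a^2 - t^2)) := by
  set F : ℝ → ℂ := fun s : ℝ => ((a : ℂ)^2 - (s : ℂ)^2) * x' s with hF
  -- measurability of g' on Ioo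
  have hmeas : AEStronglyMeasurable g' (volume.restrict (Ioo (-a) a)) := by
    have hderiv : ∀ᵐ u ∂(volume.restrict (Ioo (-a) a)), deriv F u = g' u :=
      (ae_restrict_iff' measurableSet_Ioo).mpr (ae_of_all _ (fun u hu => (hg u hu).deriv))
    exact ((measurable_deriv F).aestronglyMeasurable).congr hderiv
  have hvol : volume (Ioo (-a) a) ≠ ⊤ := (measure_Ioo_lt_top).ne
  have hgi : IntegrableOn g' (Ioo (-a) a) := by
    have hb : IntegrableOn (fun u : ℝ => 1 + ‖g' u‖^2) (Ioo (-a) a) :=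
      ((integrableOn_const_iff).mpr (Or.inr measure_Ioo_lt_top)).add hint
    refine Integrable.mono' hb hmeas (ae_of_all _ (fun u => ?_))
    have := norm_nonneg (g' u)
    nlinarith [sq_nonneg (‖g' u‖ - 1)]
  have hL2' : ∫ u in Ioo (-a) a, ‖g' u‖^2 = C^2 := by
    rw [intervalIntegral.integral_of_le (by linarith : -a ≤ a),
      integral_Ioc_eq_integral_Ioo] at hL2
    exact hL2
  -- key bound on increments
  have hbound : ∀ s ∈ Ioo (-a) a, ∀ t ∈ Ioo (-a) a, s ≤ t →
      ‖F t - F s‖ ≤ Real.sqrt (t - s) * C := by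
    intro s hs t ht hst
    have hsub : Icc s t ⊆ Ioo (-a) a := fun u hu => ⟨lt_of_lt_of_le hs.1 hu.1, lt_of_le_of_lt hu.2 ht.2⟩
    have hsubc : Ioc s t ⊆ Ioo (-a) a := fun u hu => hsub ⟨hu.1.le, hu.2⟩
    have hii : IntervalIntegrable g' volume s t := by
      rw [intervalIntegrable_iff_integrableOn_Ioc_of_le hst]
      exact hgi.mono_set hsubc
    have hftc : ∫ u in s..t, g' u = F t - F s := by
      refine intervalIntegral.integral_eq_sub_of_hasDerivAt (fun u hu => ?_) hii
      rw [uIcc_of_le hst] at hu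
      exact hg u (hsub hu)
    rw [← hftc]
    have h1 : ‖∫ u in s..t, g' u‖ ≤ ∫ u in Ioc s t, ‖g' u‖ := by
      rw [intervalIntegral.integral_of_le hst]
      exact norm_integral_le_integral_norm _
    have h2 : ∫ u in Ioc s t, ‖g' u‖ ≤
        Real.sqrt (volume (Ioc s t)).toReal * Real.sqrt (∫ u in Ioc s t, ‖g' u‖^2) :=
      cs_aux measurableSet_Ioc _ ((hgi.mono_set hsubc).norm) (hint.mono_set hsubc)
        (ne_top_of_le_ne_top hvol (measure_mono hsubc))
    have h3 : (volume (Ioc s t)).toReal = t - s := by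
      rw [Real.volume_Ioc, ENNReal.toReal_ofReal (by linarith)]
    have h4 : ∫ u in Ioc s t, ‖g' u‖^2 ≤ C^2 := by
      rw [← hL2']
      refine setIntegral_mono_set hint (ae_of_all _ (fun u => sq_nonneg _))
        (HasSubset.Subset.eventuallyLE hsubc)
    have h5 : Real.sqrt (∫ u in Ioc s t, ‖g' u‖^2) ≤ C := by
      calc Real.sqrt (∫ u in Ioc s t, ‖g' u‖^2) ≤ Real.sqrt (C^2) := Real.sqrt_le_sqrt h4
        _ = C := Real.sqrt_sq hC.le
    calc ‖∫ u in s..t, g' u‖ ≤ Real.sqrt (volume (Ioc s t)).toReal * Real.sqrt (∫ u in Ioc s t, ‖g' u‖^2) := le_trans h1 h2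
      _ ≤ Real.sqrt (t - s) * C := by
          rw [h3]
          exact mul_le_mul_of_nonneg_left h5 (Real.sqrt_nonneg _)
  intro t ht
  -- left bound
  have hleft : ‖F t‖ ≤ Real.sqrt (a + t) * C := by
    refine le_of_forall_pos_le_add (fun ε hε => ?_)
    have hne : (nhdsWithin (-a) (Ioo (-a) a)).NeBot := by
      rw [← mem_closure_iff_nhdsWithin_neBot, closure_Ioo (by linarith : (-a) ≠ a)]
      exact ⟨le_refl _, by linarith⟩
    have h1 : ∀ᶠ s in nhdsWithin (-a) (Ioo (-a) a), ‖F s‖ < ε :=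
      (NormedAddCommGroup.tendsto_nhds_zero.mp hlim_left) ε hε
    have h2 : ∀ᶠ s in nhdsWithin (-a) (Ioo (-a) a), s ∈ Ioo (-a) a :=
      eventually_mem_nhdsWithin
    have h3 : ∀ᶠ s in nhdsWithin (-a) (Ioo (-a) a), s < t :=
      ((eventually_lt_nhds ht.1).filter_mono nhdsWithin_le_nhds)
    obtain ⟨s, hsF, hsIoo, hst⟩ := (h1.and (h2.and h3)).exists
    have hb := hbound s hsIoo t ht hst.le
    have hsq : Real.sqrt (t - s) ≤ Real.sqrt (a + t) :=
      Real.sqrt_le_sqrt (by linarith [hsIoo.1])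
    calc ‖F t‖ = ‖F s + (F t - F s)‖ := by ring_nf
      _ ≤ ‖F s‖ + ‖F t - F s‖ := norm_add_le _ _
      _ ≤ ε + Real.sqrt (a + t) * C :=
          add_le_add hsF.le (le_trans hb (mul_le_mul_of_nonneg_right hsq hC.le))
      _ = Real.sqrt (a + t) * C + ε := by ring
  have hright : ‖F t‖ ≤ Real.sqrt (a - t) * C := by
    refine le_of_forall_pos_le_add (fun ε hε => ?_)
    have hne : (nhdsWithin a (Ioo (-a) a)).NeBot := by
      rw [← mem_closure_iff_nhdsWithin_neBot, closure_Ioo (by linarith : (-a) ≠ a)]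
      exact ⟨by linarith, le_refl _⟩
    have h1 : ∀ᶠ s in nhdsWithin a (Ioo (-a) a), ‖F s‖ < ε :=
      (NormedAddCommGroup.tendsto_nhds_zero.mp hlim_right) ε hε
    have h2 : ∀ᶠ s in nhdsWithin a (Ioo (-a) a), s ∈ Ioo (-a) a :=
      eventually_mem_nhdsWithin
    have h3 : ∀ᶠ s in nhdsWithin a (Ioo (-a) a), t < s :=
      ((eventually_gt_nhds ht.2).filter_mono nhdsWithin_le_nhds)
    obtain ⟨u, huF, huIoo, htu⟩ := (h1.and (h2.and h3)).exists
    have hb := hbound t ht u huIoo htu.le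
    have hsq : Real.sqrt (u - t) ≤ Real.sqrt (a - t) :=
      Real.sqrt_le_sqrt (by linarith [huIoo.2])
    calc ‖F t‖ = ‖F u + (F t - F u)‖ := by ring_nf
      _ ≤ ‖F u‖ + ‖F t - F u‖ := norm_add_le _ _
      _ ≤ ε + Real.sqrt (a - t) * C := by
          rw [norm_sub_rev]
          exact add_le_add huF.le (le_trans hb (mul_le_mul_of_nonneg_right hsq hC.le))
      _ = Real.sqrt (a - t) * C + ε := by ring
  have hA : (0:ℝ) < a^2 - t^2 := by nlinarith [ht.1, ht.2]
  have hkey : ‖F t‖ ≤ C * Real.sqrt (a^2 - t^2) / Real.sqrt a := by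
    have hdiv : Real.sqrt ((a^2 - t^2) / a) = Real.sqrt (a^2 - t^2) / Real.sqrt a :=
      Real.sqrt_div hA.le a
    rcases le_total t 0 with h0 | h0
    · have hle : a + t ≤ (a^2 - t^2) / a := by
        rw [le_div_iff₀ ha]; nlinarith [ht.1]
      calc ‖F t‖ ≤ Real.sqrt (a + t) * C := hleft
        _ ≤ Real.sqrt ((a^2 - t^2) / a) * C :=
            mul_le_mul_of_nonneg_right (Real.sqrt_le_sqrt hle) hC.le
        _ = C * Real.sqrt (a^2 - t^2) / Real.sqrt a := by rw [hdiv]; ring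
    · have hle : a - t ≤ (a^2 - t^2) / a := by
        rw [le_div_iff₀ ha]; nlinarith [ht.2]
      calc ‖F t‖ ≤ Real.sqrt (a - t) * C := hright
        _ ≤ Real.sqrt ((a^2 - t^2) / a) * C :=
            mul_le_mul_of_nonneg_right (Real.sqrt_le_sqrt hle) hC.le
        _ = C * Real.sqrt (a^2 - t^2) / Real.sqrt a := by rw [hdiv]; ring
  refine ⟨hkey, ?_⟩
  have hnormF : ‖F t‖ = (a^2 - t^2) * ‖x' t‖ := by
    have hcast : ((a : ℂ)^2 - (t : ℂ)^2) = ((a^2 - t^2 : ℝ) : ℂ) := by push_cast; ring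
    rw [hF]
    simp only [norm_mul, hcast, Complex.norm_real, Real.norm_eq_abs, abs_of_pos hA]
  set s2 := Real.sqrt (a^2 - t^2) with hs2
  have hspos : 0 < s2 := Real.sqrt_pos.mpr hA
  have hapos : 0 < Real.sqrt a := Real.sqrt_pos.mpr ha
  have hs : s2 * s2 = a^2 - t^2 := Real.mul_self_sqrt hA.le
  rw [hnormF] at hkey
  have hrhs : (C / Real.sqrt a) * (1 / s2)
      = (C * s2 / Real.sqrt a) / (a^2 - t^2) := by
    rw [← hs]; field_simp
  rw [hrhs, le_div_iff₀ hA, mul_comm]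
  exact hkey
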